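/- If a sequence of errors h_k = f(x_k) - f(x*) satisfies h_{k+1} ≤ (1 - 2/(k+2)) h_k + (2/(k+2))² (L D²/2) for all k ≥ 0, then h_k ≤ 2LD²/(k+2) for all k ≥ 1. -/

import Mathlib

/-- The standard Frank-Wolfe error recursion implies the `O(1/k)` rate. -/
theorem fw_error_recursion (h : ℕ → ℝ) (L D : ℝ) (hL : 0 ≤ L) (hD : 0 ≤ D)
    (hnonneg : ∀ k, 0 ≤ h k)
    (hrec : ∀ k : ℕ,
      h (k + 1) ≤ (1 - 2 / ((k : ℝ) + 2)) * h k + (2 / ((k : ℝ) + 2)) ^ 2 * (L * D ^ 2 / 2)) :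
    ∀ k : ℕ, 1 ≤ k → h k ≤ 2 * L * D ^ 2 / ((k : ℝ) + 2) := by
  have hLD : 0 ≤ L * D ^ 2 := mul_nonneg hL (sq_nonneg D)
  intro k hk
  induction k with
  | zero => omega
  | succ n ih =>
    rcases Nat.eq_zero_or_pos n with hn | hn
    · subst hn
      have h0 := hrec 0
      norm_num at h0 ⊢
      nlinarith [hnonneg 0]
    · have ihn := ih hn
      have hr := hrec n
      have hpos : (0:ℝ) < (n:ℝ) + 2 := by positivity
      have hbound : h (n + 1) ≤ (1 - 2 / ((n : ℝ) + 2)) * (2 * L * D ^ 2 / ((n : ℝ) + 2))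
          + (2 / ((n : ℝ) + 2)) ^ 2 * (L * D ^ 2 / 2) := by
        refine hr.trans (add_le_add_left (mul_le_mul_of_nonneg_left ihn ?_) _)
        have : (2:ℝ) / ((n:ℝ) + 2) ≤ 1 := by
          rw [div_le_one hpos]; linarith
        linarith
      push_cast
      refine hbound.trans ?_
      have hne : ((n:ℝ) + 2) ≠ 0 := ne_of_gt hpos
      have hne3 : ((n:ℝ) + 1 + 2) ≠ 0 := by positivity
      have heq : (1 - 2 / ((n:ℝ) + 2)) * (2 * L * D ^ 2 / ((n:ℝ) + 2))
          + (2 / ((n:ℝ) + 2)) ^ 2 * (L * D ^ 2 / 2)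
          = 2 * L * D ^ 2 * ((n:ℝ) + 1) / ((n:ℝ) + 2) ^ 2 := by
        field_simp
        ring
      rw [heq, div_le_div_iff₀ (by positivity) (by positivity)]
      nlinarith [mul_nonneg hLD (Nat.cast_nonneg (α := ℝ) n), mul_nonneg (mul_nonneg hLD (Nat.cast_nonneg (α := ℝ) n)) (Nat.cast_nonneg (α := ℝ) n)]
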